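/- Under the assumptions of the bounded-iterates lemma for delayed gradient descent-ascent, with step size α = 1/(2√(LGτ_max T)), the averaged iterates x̄_T = (1/T)Σ_k x_k, ȳ_T = (1/T)Σ_k y_k satisfy the restricted duality-gap bound max_{y : (x̄_T, y) ∈ H} f(x̄_T, y) − min_{x : (x, ȳ_T) ∈ H} f(x, ȳ_T) ≤ 44B √(GLτ_max/T), where H = {z : ‖z − z*‖² ≤ 10B} and B = max{‖z_1 − z*‖², G}. -/

import Mathlib

open scoped InnerProductSpace

lemma convexOn_grad_ineq {E : Type*} [NormedAddCommGroup E] [InnerProductSpace ℝ E]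
    [CompleteSpace E]
    {φ : E → ℝ} {g v : E} (hc : ConvexOn ℝ Set.univ φ) (hg : HasGradientAt φ g v) (u : E) :
    φ v + ⟪g, u - v⟫_ℝ ≤ φ u := by
  have hline : HasDerivAt (fun t : ℝ => t • (u - v) + v) (u - v) 0 := by
    simpa using ((hasDerivAt_id (0:ℝ)).smul_const (u - v)).add_const v
  have hψd : HasDerivAt (fun t : ℝ => φ (t • (u - v) + v)) ⟪g, u - v⟫_ℝ 0 := by
    have h0 : (fun t : ℝ => t • (u - v) + v) 0 = v := by simp
    have := (hasGradientAt_iff_hasFDerivAt.mp hg)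
    rw [← h0] at this
    simpa [Function.comp_def] using this.comp_hasDerivAt 0 hline
  have hψc : ConvexOn ℝ Set.univ (fun t : ℝ => φ (t • (u - v) + v)) := by
    have := hc.comp_affineMap (AffineMap.lineMap v u)
    simpa [Function.comp_def, AffineMap.lineMap_apply, vsub_eq_sub, vadd_eq_add] using this
  have := hψc.le_slope_of_hasDerivAt (Set.mem_univ (0:ℝ)) (Set.mem_univ (1:ℝ)) one_pos hψd
  rw [slope_def_field] at this
  simp only [one_smul, zero_smul, sub_add_cancel, zero_add, sub_zero, div_one] at this
  linarith

lemma hasGradientAt_neg_fun {E : Type*} [NormedAddCommGroup E] [InnerProductSpace ℝ E]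
    [CompleteSpace E] {φ : E → ℝ} {g v : E} (h : HasGradientAt φ g v) :
    HasGradientAt (fun x => -φ x) (-g) v := by
  rw [hasGradientAt_iff_hasFDerivAt] at h ⊢
  rw [map_neg]
  exact h.neg

lemma avg_norm_le {E : Type*} [SeminormedAddCommGroup E] [NormedSpace ℝ E]
    {T : ℕ} (hT : 1 ≤ T) (g : ℕ → E) {c : ℝ}
    (h : ∀ k ∈ Finset.Icc 1 T, ‖g k‖ ≤ c) :
    ‖(T:ℝ)⁻¹ • ∑ k ∈ Finset.Icc 1 T, g k‖ ≤ c := by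
  have hT0 : (0:ℝ) < (T:ℝ) := by exact_mod_cast hT
  rw [norm_smul, Real.norm_eq_abs, abs_of_pos (inv_pos.mpr hT0)]
  calc (T:ℝ)⁻¹ * ‖∑ k ∈ Finset.Icc 1 T, g k‖
      ≤ (T:ℝ)⁻¹ * ∑ k ∈ Finset.Icc 1 T, ‖g k‖ :=
        mul_le_mul_of_nonneg_left (norm_sum_le _ _) (by positivity)
    _ ≤ (T:ℝ)⁻¹ * ((T:ℝ) * c) := by
        apply mul_le_mul_of_nonneg_left _ (by positivity)
        calc ∑ k ∈ Finset.Icc 1 T, ‖g k‖ ≤ ∑ _k ∈ Finset.Icc 1 T, c := Finset.sum_le_sum h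
          _ = (T:ℝ) * c := by
              rw [Finset.sum_const, Nat.card_Icc, Nat.add_sub_cancel, nsmul_eq_mul]
    _ = c := by field_simp

lemma sq_sum_bound {a b Bv : ℝ} (ha : 0 ≤ a) (hb : 0 ≤ b)
    (h1 : a^2 ≤ Bv) (h2 : b^2 ≤ 20*Bv) : (a+b)^2 ≤ 30*Bv := by
  nlinarith [sq_nonneg (9*a - 2*b)]

set_option maxHeartbeats 4000000 in
/-- Theorem 2: restricted duality-gap rate for delayed gradient
descent-ascent on smooth convex-concave functions with bounded gradients. -/
theorem DGDA_convex_concave_rate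
    {m n : ℕ}
    (f : EuclideanSpace ℝ (Fin m) → EuclideanSpace ℝ (Fin n) → ℝ)
    (gx : EuclideanSpace ℝ (Fin m) → EuclideanSpace ℝ (Fin n) → EuclideanSpace ℝ (Fin m))
    (gy : EuclideanSpace ℝ (Fin m) → EuclideanSpace ℝ (Fin n) → EuclideanSpace ℝ (Fin n))
    (hgx : ∀ x y, HasGradientAt (fun x' => f x' y) (gx x y) x)
    (hgy : ∀ x y, HasGradientAt (fun y' => f x y') (gy x y) y)
    (hconv : ∀ y, ConvexOn ℝ Set.univ (fun x => f x y))
    (hconc : ∀ x, ConcaveOn ℝ Set.univ (fun y => f x y))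
    (G L : ℝ) (hG : 1 < G) (hL : 1 < L)
    (hGx : ∀ x y, ‖gx x y‖ ≤ G) (hGy : ∀ x y, ‖gy x y‖ ≤ G)
    (hLx : ∀ x₁ y₁ x₂ y₂, ‖gx x₁ y₁ - gx x₂ y₂‖ ≤ L * (‖x₁ - x₂‖ + ‖y₁ - y₂‖))
    (hLy : ∀ x₁ y₁ x₂ y₂, ‖gy x₁ y₁ - gy x₂ y₂‖ ≤ L * (‖x₁ - x₂‖ + ‖y₁ - y₂‖))
    -- saddle point
    (xstar : EuclideanSpace ℝ (Fin m)) (ystar : EuclideanSpace ℝ (Fin n))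
    (hsaddle : ∀ x y, f xstar y ≤ f xstar ystar ∧ f xstar ystar ≤ f x ystar)
    (zstar : WithLp 2 (EuclideanSpace ℝ (Fin m) × EuclideanSpace ℝ (Fin n)))
    (hzstar : zstar = (WithLp.equiv 2 _).symm (xstar, ystar))
    -- the operator Φ
    (Φ : WithLp 2 (EuclideanSpace ℝ (Fin m) × EuclideanSpace ℝ (Fin n)) →
         WithLp 2 (EuclideanSpace ℝ (Fin m) × EuclideanSpace ℝ (Fin n)))
    (hΦ : ∀ z, Φ z =
      (WithLp.equiv 2 (EuclideanSpace ℝ (Fin m) × EuclideanSpace ℝ (Fin n))).symm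
        (gx (WithLp.equiv 2 _ z).1 (WithLp.equiv 2 _ z).2,
         -(gy (WithLp.equiv 2 _ z).1 (WithLp.equiv 2 _ z).2)))
    -- delays, horizon, step size
    (τ : ℕ → ℕ) (τmax : ℕ) (hτmax : 1 ≤ τmax) (hτ : ∀ k, τ k ≤ τmax)
    (T : ℕ) (hT : 1 ≤ T) (hTL : L ≤ (T : ℝ))
    (α : ℝ) (hα : α = 1 / (2 * Real.sqrt (L * G * τmax * T)))
    -- DGDA iterates, started at z 1
    (z : ℕ → WithLp 2 (EuclideanSpace ℝ (Fin m) × EuclideanSpace ℝ (Fin n)))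
    (hstep : ∀ k, 1 ≤ k → z (k + 1) = z k - α • Φ (z (max (k - τ k) 1)))
    (B : ℝ) (hB : B = max (‖z 1 - zstar‖ ^ 2) G)
    -- the bounded set H and the averaged iterates
    (H : Set (WithLp 2 (EuclideanSpace ℝ (Fin m) × EuclideanSpace ℝ (Fin n))))
    (hH : H = {w | ‖w - zstar‖ ^ 2 ≤ 10 * B})
    (xbar : EuclideanSpace ℝ (Fin m)) (ybar : EuclideanSpace ℝ (Fin n))
    (hxbar : xbar = (T : ℝ)⁻¹ • ∑ k ∈ Finset.Icc 1 T, (WithLp.equiv 2 _ (z k)).1)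
    (hybar : ybar = (T : ℝ)⁻¹ • ∑ k ∈ Finset.Icc 1 T, (WithLp.equiv 2 _ (z k)).2) :
    sSup ((fun y => f xbar y) ''
        {y | (WithLp.equiv 2 (EuclideanSpace ℝ (Fin m) × EuclideanSpace ℝ (Fin n))).symm
              (xbar, y) ∈ H}) -
      sInf ((fun x => f x ybar) ''
        {x | (WithLp.equiv 2 (EuclideanSpace ℝ (Fin m) × EuclideanSpace ℝ (Fin n))).symm
              (x, ybar) ∈ H}) ≤
      44 * B * Real.sqrt (G * L * τmax / T) := by
  classical
  simp only [WithLp.equiv_apply, WithLp.equiv_symm_apply, WithLp.ofLp_fst, WithLp.ofLp_snd] at hxbar hybar hΦ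
  -- basic positivity facts
  have hG0 : (0:ℝ) < G := one_pos.trans hG
  have hL0 : (0:ℝ) < L := one_pos.trans hL
  have hT0 : (0:ℝ) < (T:ℝ) := by exact_mod_cast hT
  have hτ1 : (1:ℝ) ≤ (τmax:ℝ) := by exact_mod_cast hτmax
  have hτ0 : (0:ℝ) < (τmax:ℝ) := lt_of_lt_of_le one_pos hτ1
  set s : ℝ := Real.sqrt (L * G * τmax * T) with hs_def
  have hsq : s ^ 2 = L * G * τmax * T := Real.sq_sqrt (by positivity)
  have hs0 : (0:ℝ) < s := Real.sqrt_pos.mpr (by positivity)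
  have hα0 : (0:ℝ) < α := by rw [hα]; positivity
  have hαs : α * s = 1 / 2 := by rw [hα]; field_simp
  have hα2 : α ^ 2 * (L * G * τmax * T) = 1 / 4 := by
    rw [hα]; rw [div_pow, mul_pow, hsq]; field_simp; ring
  have hq : α ^ 2 * (G ^ 2 * τmax * T) = G / (4 * L) := by
    rw [hα, div_pow, mul_pow, hsq]
    rw [div_mul_eq_mul_div, div_eq_div_iff (by positivity) (by positivity)]
    ring
  have hGB : G ≤ B := hB ▸ le_max_right _ _
  have h1B : (1:ℝ) ≤ B := le_trans hG.le hGB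
  have hB0 : (0:ℝ) < B := lt_of_lt_of_le one_pos h1B
  have hz1B : ‖z 1 - zstar‖ ^ 2 ≤ B := hB ▸ le_max_left _ _
  have hsqrt2 : Real.sqrt 2 ≤ 3/2 := by
    rw [show (3/2:ℝ) = Real.sqrt ((3/2)^2) from (Real.sqrt_sq (by norm_num)).symm]
    exact Real.sqrt_le_sqrt (by norm_num)
  have hsqrt2' : (1:ℝ) ≤ Real.sqrt 2 := by
    rw [show (1:ℝ) = Real.sqrt 1 from (Real.sqrt_one).symm]
    exact Real.sqrt_le_sqrt (by norm_num)
  -- the delay index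
  set D : ℕ → ℕ := fun k => max (k - τ k) 1 with hD
  have hstepD : ∀ k, 1 ≤ k → z (k + 1) = z k - α • Φ (z (D k)) := fun k hk => hstep k hk
  have hD1 : ∀ k, 1 ≤ D k := fun k => le_max_right _ _
  have hDk : ∀ k, 1 ≤ k → D k ≤ k := fun k hk => max_le (Nat.sub_le _ _) hk
  have hkD : ∀ k, k - D k ≤ τmax := by
    intro k
    have h1 : k - τ k ≤ D k := le_max_left _ _
    have := hτ k
    omega
  -- master gap inequality
  have master : ∀ (u : WithLp 2 (EuclideanSpace ℝ (Fin m) × EuclideanSpace ℝ (Fin n)))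
      (x : EuclideanSpace ℝ (Fin m)) (y : EuclideanSpace ℝ (Fin n)),
      f u.fst y - f x u.snd ≤ ⟪Φ u, u - (WithLp.equiv 2 _).symm (x, y)⟫_ℝ := by
    intro u x y
    have h1 : f u.fst u.snd + ⟪gx u.fst u.snd, x - u.fst⟫_ℝ ≤ f x u.snd :=
      convexOn_grad_ineq (hconv u.snd) (hgx u.fst u.snd) x
    have h2 : -f u.fst u.snd + ⟪-(gy u.fst u.snd), y - u.snd⟫_ℝ ≤ -f u.fst y :=
      convexOn_grad_ineq (hconc u.fst).neg (hasGradientAt_neg_fun (hgy u.fst u.snd)) y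
    have hin : ⟪Φ u, u - (WithLp.equiv 2 _).symm (x, y)⟫_ℝ
        = ⟪gx u.fst u.snd, u.fst - x⟫_ℝ + ⟪-(gy u.fst u.snd), u.snd - y⟫_ℝ := by
      rw [hΦ u]
      rfl
    have e1 : ⟪gx u.fst u.snd, u.fst - x⟫_ℝ = -⟪gx u.fst u.snd, x - u.fst⟫_ℝ := by
      rw [← inner_neg_right, neg_sub]
    have e2 : ⟪-(gy u.fst u.snd), u.snd - y⟫_ℝ = -⟪-(gy u.fst u.snd), y - u.snd⟫_ℝ := by
      rw [← inner_neg_right, neg_sub]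
    rw [hin, e1, e2]
    linarith
  -- monotonicity at the saddle point
  have hmono : ∀ u, (0:ℝ) ≤ ⟪Φ u, u - zstar⟫_ℝ := by
    intro u
    have h := master u xstar ystar
    rw [← hzstar] at h
    have h1 := (hsaddle u.fst u.snd).2
    have h2 := (hsaddle u.fst u.snd).1
    linarith
  -- operator norm bound
  have hΦnorm : ∀ u, ‖Φ u‖ ≤ Real.sqrt 2 * G := by
    intro u
    have h2 : ‖Φ u‖^2 ≤ 2 * G^2 := by
      rw [hΦ u, WithLp.prod_norm_sq_eq_of_L2]
      simp only [WithLp.toLp_fst, WithLp.toLp_snd, norm_neg]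
      have a1 := hGx u.fst u.snd
      have a2 := hGy u.fst u.snd
      nlinarith [norm_nonneg (gx u.fst u.snd), norm_nonneg (gy u.fst u.snd)]
    have h3 : ‖Φ u‖ ≤ Real.sqrt (2 * G^2) := by
      rw [← Real.sqrt_sq (norm_nonneg (Φ u))]
      exact Real.sqrt_le_sqrt h2
    calc ‖Φ u‖ ≤ Real.sqrt (2 * G^2) := h3
      _ = Real.sqrt 2 * G := by
          rw [Real.sqrt_mul (by norm_num : (0:ℝ) ≤ 2), Real.sqrt_sq hG0.le]
  have hΦsq : ∀ u, ‖Φ u‖^2 ≤ 2 * G^2 := by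
    intro u
    have h2 : (Real.sqrt 2 * G)^2 = 2 * G^2 := by
      rw [mul_pow, Real.sq_sqrt (by norm_num : (0:ℝ) ≤ 2)]
    exact h2 ▸ pow_le_pow_left₀ (norm_nonneg (Φ u)) (hΦnorm u) 2
  -- one-step identity
  have key : ∀ k, 1 ≤ k → ∀ w,
      ‖z (k+1) - w‖^2 = ‖z k - w‖^2 - 2*α*⟪Φ (z (D k)), z k - w⟫_ℝ + α^2 * ‖Φ (z (D k))‖^2 := by
    intro k hk w
    rw [hstepD k hk]
    have e : z k - α • Φ (z (D k)) - w = (z k - w) - α • Φ (z (D k)) := by abel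
    rw [e, norm_sub_sq_real, real_inner_smul_right, norm_smul, Real.norm_eq_abs,
      abs_of_pos hα0, mul_pow]
    rw [real_inner_comm]
    ring
  -- lag bound
  have lag : ∀ k, 1 ≤ k → ‖z k - z (D k)‖ ≤ α * (Real.sqrt 2 * G) * τmax := by
    intro k hk
    have hd1 : 1 ≤ D k := hD1 k
    have hdk : D k ≤ k := hDk k hk
    have htel : ∑ j ∈ Finset.Ico (D k) k, (z (j+1) - z j) = z k - z (D k) := by
      rw [Finset.sum_Ico_eq_sum_range]
      have h := Finset.sum_range_sub (fun i => z (D k + i)) (k - D k)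
      simpa [Nat.add_sub_cancel' hdk, add_assoc] using h
    rw [← htel]
    calc ‖∑ j ∈ Finset.Ico (D k) k, (z (j+1) - z j)‖
        ≤ ∑ j ∈ Finset.Ico (D k) k, ‖z (j+1) - z j‖ := norm_sum_le _ _
      _ ≤ ∑ _j ∈ Finset.Ico (D k) k, α * (Real.sqrt 2 * G) := by
          apply Finset.sum_le_sum
          intro j hj
          have hj1 : 1 ≤ j := le_trans hd1 (Finset.mem_Ico.mp hj).1
          rw [hstepD j hj1]
          have e : z j - α • Φ (z (D j)) - z j = -(α • Φ (z (D j))) := by abel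
          rw [e, norm_neg, norm_smul, Real.norm_eq_abs, abs_of_pos hα0]
          exact mul_le_mul_of_nonneg_left (hΦnorm _) hα0.le
      _ = ((k - D k : ℕ) : ℝ) * (α * (Real.sqrt 2 * G)) := by
          rw [Finset.sum_const, Nat.card_Ico, nsmul_eq_mul]
      _ ≤ (τmax : ℝ) * (α * (Real.sqrt 2 * G)) := by
          apply mul_le_mul_of_nonneg_right _ (by positivity)
          exact_mod_cast hkD k
      _ = α * (Real.sqrt 2 * G) * τmax := by ring
  -- one-step descent against any reference point
  have perstep : ∀ k, 1 ≤ k → ∀ w,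
      ‖z (k+1) - w‖^2 ≤ ‖z k - w‖^2 - 2*α*⟪Φ (z (D k)), z (D k) - w⟫_ℝ
        + 6 * α^2 * G^2 * τmax := by
    intro k hk w
    have hkey := key k hk w
    have hsplit : ⟪Φ (z (D k)), z k - w⟫_ℝ
        = ⟪Φ (z (D k)), z (D k) - w⟫_ℝ + ⟪Φ (z (D k)), z k - z (D k)⟫_ℝ := by
      rw [← inner_add_right]
      congr 1
      abel
    have h2 : -⟪Φ (z (D k)), z k - z (D k)⟫_ℝ ≤ (Real.sqrt 2 * G) * (α * (Real.sqrt 2 * G) * τmax) := by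
      calc -⟪Φ (z (D k)), z k - z (D k)⟫_ℝ = ⟪Φ (z (D k)), -(z k - z (D k))⟫_ℝ := by
            rw [inner_neg_right]
        _ ≤ ‖Φ (z (D k))‖ * ‖-(z k - z (D k))‖ := real_inner_le_norm _ _
        _ ≤ (Real.sqrt 2 * G) * (α * (Real.sqrt 2 * G) * τmax) := by
            rw [norm_neg]
            exact mul_le_mul (hΦnorm _) (lag k hk) (norm_nonneg _) (by positivity)
    have hΦ2 := hΦsq (z (D k))
    have hs2 : Real.sqrt 2 ^ 2 = 2 := Real.sq_sqrt (by norm_num)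
    have he2 : (2*α) * ((Real.sqrt 2 * G) * (α * (Real.sqrt 2 * G) * τmax))
        = 4*α^2*G^2*τmax := by
      have e : (2*α) * ((Real.sqrt 2 * G) * (α * (Real.sqrt 2 * G) * τmax))
          = Real.sqrt 2 ^ 2 * (2*α^2*G^2*τmax) := by ring
      rw [e, hs2]; ring
    have hmul : (2*α) * (-⟪Φ (z (D k)), z k - z (D k)⟫_ℝ) ≤ 4*α^2*G^2*τmax := by
      rw [← he2]
      exact mul_le_mul_of_nonneg_left h2 (by positivity)
    have hmul2 : α^2 * ‖Φ (z (D k))‖^2 ≤ 2*α^2*G^2 := by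
      calc α^2 * ‖Φ (z (D k))‖^2 ≤ α^2 * (2*G^2) :=
            mul_le_mul_of_nonneg_left hΦ2 (sq_nonneg α)
        _ = 2*α^2*G^2 := by ring
    have htau : 2*α^2*G^2 ≤ 2*α^2*G^2*τmax := by
      nlinarith [mul_nonneg (sq_nonneg α) (sq_nonneg G), hτ1]
    rw [hkey, hsplit]
    nlinarith [hmul]
  -- component norm bounds
  have compX : ∀ (u v : WithLp 2 (EuclideanSpace ℝ (Fin m) × EuclideanSpace ℝ (Fin n))),
      ‖u.fst - v.fst‖ ≤ ‖u - v‖ := by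
    intro u v
    have h := WithLp.prod_norm_sq_eq_of_L2 (u - v)
    rw [WithLp.sub_fst, WithLp.sub_snd] at h
    calc ‖u.fst - v.fst‖ = Real.sqrt (‖u.fst - v.fst‖^2) := (Real.sqrt_sq (norm_nonneg _)).symm
      _ ≤ Real.sqrt (‖u - v‖^2) := Real.sqrt_le_sqrt (by nlinarith [sq_nonneg ‖u.snd - v.snd‖])
      _ = ‖u - v‖ := Real.sqrt_sq (norm_nonneg _)
  have compY : ∀ (u v : WithLp 2 (EuclideanSpace ℝ (Fin m) × EuclideanSpace ℝ (Fin n))),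
      ‖u.snd - v.snd‖ ≤ ‖u - v‖ := by
    intro u v
    have h := WithLp.prod_norm_sq_eq_of_L2 (u - v)
    rw [WithLp.sub_fst, WithLp.sub_snd] at h
    calc ‖u.snd - v.snd‖ = Real.sqrt (‖u.snd - v.snd‖^2) := (Real.sqrt_sq (norm_nonneg _)).symm
      _ ≤ Real.sqrt (‖u - v‖^2) := Real.sqrt_le_sqrt (by nlinarith [sq_nonneg ‖u.fst - v.fst‖])
      _ = ‖u - v‖ := Real.sqrt_sq (norm_nonneg _)
  have hzstar1 : zstar.fst = xstar := by rw [hzstar]; rfl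
  have hzstar2 : zstar.snd = ystar := by rw [hzstar]; rfl
  -- bounded iterates
  have bnd : ∀ j : ℕ, ‖z (1+j) - zstar‖^2 ≤ ‖z 1 - zstar‖^2 + (j:ℝ) * (6*α^2*G^2*τmax) := by
    intro j
    induction j with
    | zero => simp
    | succ j ih =>
      have hk : 1 ≤ 1 + j := Nat.le_add_right 1 j
      have hp := perstep (1+j) hk zstar
      have hm : (0:ℝ) ≤ 2*α*⟪Φ (z (D (1+j))), z (D (1+j)) - zstar⟫_ℝ :=
        mul_nonneg (by positivity) (hmono _)
      have e : 1 + (j+1) = (1+j) + 1 := by omega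
      rw [e]
      push_cast
      linarith
  have bndk : ∀ k, 1 ≤ k → k ≤ T → ‖z k - zstar‖^2 ≤ (5/2) * B := by
    intro k hk1 hkT
    obtain ⟨j, rfl⟩ : ∃ j, k = 1 + j := ⟨k - 1, by omega⟩
    have h1 := bnd j
    have hjT : (j:ℝ) ≤ (T:ℝ) := by exact_mod_cast (by omega : j ≤ T)
    have hc : (0:ℝ) ≤ 6*α^2*G^2*τmax := by positivity
    have h2 : (j:ℝ) * (6*α^2*G^2*τmax) ≤ (T:ℝ) * (6*α^2*G^2*τmax) :=
      mul_le_mul_of_nonneg_right hjT hc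
    have h3 : (T:ℝ) * (6*α^2*G^2*τmax) = 6 * (G/(4*L)) := by
      rw [← hq]; ring
    have hdl : G/L ≤ B := le_trans (div_le_self hG0.le hL.le) hGB
    have h5 : 6*(G/(4*L)) ≤ (3/2)*B := by
      have e : 6*(G/(4*L)) = (3/2)*(G/L) := by field_simp; ring
      rw [e]; linarith
    linarith [hz1B]
  -- the averaged point lies in H
  have hxbar_dist : ‖xbar - xstar‖ ≤ Real.sqrt ((5/2)*B) := by
    have e : xbar - xstar = (T:ℝ)⁻¹ • ∑ k ∈ Finset.Icc 1 T, ((z k).fst - xstar) := by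
      rw [hxbar, Finset.sum_sub_distrib, smul_sub, Finset.sum_const, Nat.card_Icc,
        Nat.add_sub_cancel, ← Nat.cast_smul_eq_nsmul ℝ, smul_smul,
        inv_mul_cancel₀ hT0.ne', one_smul]
    rw [e]
    apply avg_norm_le hT
    intro k hk
    obtain ⟨hk1, hkT⟩ := Finset.mem_Icc.mp hk
    calc ‖(z k).fst - xstar‖ = ‖(z k).fst - zstar.fst‖ := by rw [hzstar1]
      _ ≤ ‖z k - zstar‖ := compX _ _
      _ = Real.sqrt (‖z k - zstar‖^2) := (Real.sqrt_sq (norm_nonneg _)).symm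
      _ ≤ Real.sqrt ((5/2)*B) := Real.sqrt_le_sqrt (bndk k hk1 hkT)
  have hybar_dist : ‖ybar - ystar‖ ≤ Real.sqrt ((5/2)*B) := by
    have e : ybar - ystar = (T:ℝ)⁻¹ • ∑ k ∈ Finset.Icc 1 T, ((z k).snd - ystar) := by
      rw [hybar, Finset.sum_sub_distrib, smul_sub, Finset.sum_const, Nat.card_Icc,
        Nat.add_sub_cancel, ← Nat.cast_smul_eq_nsmul ℝ, smul_smul,
        inv_mul_cancel₀ hT0.ne', one_smul]
    rw [e]
    apply avg_norm_le hT
    intro k hk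
    obtain ⟨hk1, hkT⟩ := Finset.mem_Icc.mp hk
    calc ‖(z k).snd - ystar‖ = ‖(z k).snd - zstar.snd‖ := by rw [hzstar2]
      _ ≤ ‖z k - zstar‖ := compY _ _
      _ = Real.sqrt (‖z k - zstar‖^2) := (Real.sqrt_sq (norm_nonneg _)).symm
      _ ≤ Real.sqrt ((5/2)*B) := Real.sqrt_le_sqrt (bndk k hk1 hkT)
  have hsplitn : ∀ (a : EuclideanSpace ℝ (Fin m)) (b : EuclideanSpace ℝ (Fin n)),
      ‖(WithLp.equiv 2 (EuclideanSpace ℝ (Fin m) × EuclideanSpace ℝ (Fin n))).symm (a, b) - zstar‖^2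
        = ‖a - xstar‖^2 + ‖b - ystar‖^2 := by
    intro a b
    rw [hzstar, WithLp.prod_norm_sq_eq_of_L2]
    rfl
  have hsq52 : Real.sqrt ((5/2)*B) ^ 2 = (5/2)*B := Real.sq_sqrt (by positivity)
  have hzbar10 : ‖(WithLp.equiv 2 (EuclideanSpace ℝ (Fin m) × EuclideanSpace ℝ (Fin n))).symm
      (xbar, ybar) - zstar‖^2 ≤ 10*B := by
    rw [hsplitn xbar ybar]
    have h1 : ‖xbar - xstar‖^2 ≤ (5/2)*B := by
      calc ‖xbar - xstar‖^2 ≤ Real.sqrt ((5/2)*B) ^ 2 :=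
            pow_le_pow_left₀ (norm_nonneg _) hxbar_dist 2
        _ = (5/2)*B := hsq52
    have h2 : ‖ybar - ystar‖^2 ≤ (5/2)*B := by
      calc ‖ybar - ystar‖^2 ≤ Real.sqrt ((5/2)*B) ^ 2 :=
            pow_le_pow_left₀ (norm_nonneg _) hybar_dist 2
        _ = (5/2)*B := hsq52
    linarith

  -- telescoping
  have tele : ∀ (r : ℕ → ℝ), ∑ k ∈ Finset.Icc 1 T, (r k - r (k+1)) = r 1 - r (T+1) := by
    intro r
    rw [← Finset.Ico_add_one_right_eq_Icc, Finset.sum_Ico_eq_sum_range]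
    simpa [Nat.add_comm] using Finset.sum_range_sub' (fun i => r (1+i)) T
  -- summed gap bound
  have sumbound : ∀ (x' : EuclideanSpace ℝ (Fin m)) (y' : EuclideanSpace ℝ (Fin n)),
      (2*α) * ∑ k ∈ Finset.Icc 1 T, (f (z (D k)).fst y' - f x' (z (D k)).snd)
        ≤ ‖z 1 - (WithLp.equiv 2 (EuclideanSpace ℝ (Fin m) × EuclideanSpace ℝ (Fin n))).symm
            (x', y')‖^2 + (T:ℝ) * (6*α^2*G^2*τmax) := by
    intro x' y'
    set w := (WithLp.equiv 2 (EuclideanSpace ℝ (Fin m) × EuclideanSpace ℝ (Fin n))).symm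
        (x', y') with hw
    have hper : ∀ k ∈ Finset.Icc 1 T, (2*α) * (f (z (D k)).fst y' - f x' (z (D k)).snd)
        ≤ (‖z k - w‖^2 - ‖z (k+1) - w‖^2) + 6*α^2*G^2*τmax := by
      intro k hk
      obtain ⟨hk1, hkT⟩ := Finset.mem_Icc.mp hk
      have h1 := master (z (D k)) x' y'
      have hp := perstep k hk1 w
      have h3 : (2*α) * (f (z (D k)).fst y' - f x' (z (D k)).snd)
          ≤ (2*α) * ⟪Φ (z (D k)), z (D k) - w⟫_ℝ :=
        mul_le_mul_of_nonneg_left h1 (by positivity)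
      linarith
    calc (2*α) * ∑ k ∈ Finset.Icc 1 T, (f (z (D k)).fst y' - f x' (z (D k)).snd)
        = ∑ k ∈ Finset.Icc 1 T, (2*α) * (f (z (D k)).fst y' - f x' (z (D k)).snd) := by
          rw [Finset.mul_sum]
      _ ≤ ∑ k ∈ Finset.Icc 1 T, ((‖z k - w‖^2 - ‖z (k+1) - w‖^2) + 6*α^2*G^2*τmax) :=
          Finset.sum_le_sum hper
      _ = (∑ k ∈ Finset.Icc 1 T, (‖z k - w‖^2 - ‖z (k+1) - w‖^2))
            + (T:ℝ) * (6*α^2*G^2*τmax) := by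
          rw [Finset.sum_add_distrib, Finset.sum_const, Nat.card_Icc, Nat.add_sub_cancel,
            nsmul_eq_mul]
      _ = (‖z 1 - w‖^2 - ‖z (T+1) - w‖^2) + (T:ℝ) * (6*α^2*G^2*τmax) := by
          rw [tele (fun k => ‖z k - w‖^2)]
      _ ≤ ‖z 1 - w‖^2 + (T:ℝ) * (6*α^2*G^2*τmax) := by
          have := sq_nonneg ‖z (T+1) - w‖
          linarith
  -- Jensen for the averaged delayed iterates
  have hwsum : ∑ _k ∈ Finset.Icc 1 T, (T:ℝ)⁻¹ = 1 := by
    rw [Finset.sum_const, Nat.card_Icc, Nat.add_sub_cancel, nsmul_eq_mul,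
      mul_inv_cancel₀ hT0.ne']
  have jensX : ∀ y', f ((T:ℝ)⁻¹ • ∑ k ∈ Finset.Icc 1 T, (z (D k)).fst) y'
      ≤ (T:ℝ)⁻¹ * ∑ k ∈ Finset.Icc 1 T, f (z (D k)).fst y' := by
    intro y'
    rw [Finset.smul_sum, Finset.mul_sum]
    exact (hconv y').map_sum_le (fun i _ => by positivity) hwsum (fun i _ => Set.mem_univ _)
  have jensY : ∀ x', (T:ℝ)⁻¹ * ∑ k ∈ Finset.Icc 1 T, f x' (z (D k)).snd
      ≤ f x' ((T:ℝ)⁻¹ • ∑ k ∈ Finset.Icc 1 T, (z (D k)).snd) := by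
    intro x'
    rw [Finset.smul_sum, Finset.mul_sum]
    exact (hconc x').le_map_sum (fun i _ => by positivity) hwsum (fun i _ => Set.mem_univ _)
  -- Lipschitz bounds from gradient bounds
  have lipX : ∀ a b y', f a y' ≤ f b y' + G * ‖a - b‖ := by
    intro a b y'
    have h1 := convexOn_grad_ineq (hconv y') (hgx a y') b
    have h2 : |⟪gx a y', b - a⟫_ℝ| ≤ G * ‖a - b‖ := by
      calc |⟪gx a y', b - a⟫_ℝ| ≤ ‖gx a y'‖ * ‖b - a‖ := abs_real_inner_le_norm _ _
        _ ≤ G * ‖a - b‖ := by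
            rw [norm_sub_rev b a]
            exact mul_le_mul_of_nonneg_right (hGx _ _) (norm_nonneg _)
    have h3 := abs_le.mp h2
    linarith [h3.1]
  have lipY : ∀ x' a b, f x' a ≤ f x' b + G * ‖a - b‖ := by
    intro x' a b
    have h1 := convexOn_grad_ineq (hconc x').neg (hasGradientAt_neg_fun (hgy x' b)) a
    simp only [Pi.neg_apply] at h1
    rw [inner_neg_left] at h1
    have h2 : |⟪gy x' b, a - b⟫_ℝ| ≤ G * ‖a - b‖ := by
      calc |⟪gy x' b, a - b⟫_ℝ| ≤ ‖gy x' b‖ * ‖a - b‖ := abs_real_inner_le_norm _ _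
        _ ≤ G * ‖a - b‖ := mul_le_mul_of_nonneg_right (hGy _ _) (norm_nonneg _)
    have h3 := abs_le.mp h2
    linarith [h3.2]
  -- distance between averaged iterates and averaged delayed iterates
  have avgdX : ‖xbar - (T:ℝ)⁻¹ • ∑ k ∈ Finset.Icc 1 T, (z (D k)).fst‖
      ≤ α * (Real.sqrt 2 * G) * τmax := by
    have e : xbar - (T:ℝ)⁻¹ • ∑ k ∈ Finset.Icc 1 T, (z (D k)).fst
        = (T:ℝ)⁻¹ • ∑ k ∈ Finset.Icc 1 T, ((z k).fst - (z (D k)).fst) := by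
      rw [hxbar, Finset.sum_sub_distrib, smul_sub]
    rw [e]
    apply avg_norm_le hT
    intro k hk
    have hk1 := (Finset.mem_Icc.mp hk).1
    calc ‖(z k).fst - (z (D k)).fst‖ ≤ ‖z k - z (D k)‖ := compX _ _
      _ ≤ α * (Real.sqrt 2 * G) * τmax := lag k hk1
  have avgdY : ‖ybar - (T:ℝ)⁻¹ • ∑ k ∈ Finset.Icc 1 T, (z (D k)).snd‖
      ≤ α * (Real.sqrt 2 * G) * τmax := by
    have e : ybar - (T:ℝ)⁻¹ • ∑ k ∈ Finset.Icc 1 T, (z (D k)).snd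
        = (T:ℝ)⁻¹ • ∑ k ∈ Finset.Icc 1 T, ((z k).snd - (z (D k)).snd) := by
      rw [hybar, Finset.sum_sub_distrib, smul_sub]
    rw [e]
    apply avg_norm_le hT
    intro k hk
    have hk1 := (Finset.mem_Icc.mp hk).1
    calc ‖(z k).snd - (z (D k)).snd‖ ≤ ‖z k - z (D k)‖ := compY _ _
      _ ≤ α * (Real.sqrt 2 * G) * τmax := lag k hk1
  -- arithmetic preparations
  have hdl : G/L ≤ B := le_trans (div_le_self hG0.le hL.le) hGB
  have h2αs : (2*α)⁻¹ = s := by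
    rw [hα]; field_simp
  have hTt : (T:ℝ)*(6*α^2*G^2*τmax) = (3/2)*(G/L) := by
    have e : (T:ℝ)*(6*α^2*G^2*(τmax:ℝ)) = 6*(α^2*(G^2*(τmax:ℝ)*(T:ℝ))) := by ring
    rw [e, hq]
    field_simp
    ring
  have hαG2 : α * (G^2 * (τmax:ℝ)) = (G*s)/(2*L*(T:ℝ)) := by
    rw [hα, one_div, inv_mul_eq_div, div_eq_div_iff (by positivity) (by positivity)]
    calc G^2*(τmax:ℝ)*(2*L*(T:ℝ)) = 2*G*(L*G*(τmax:ℝ)*(T:ℝ)) := by ring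
      _ = 2*G*s^2 := by rw [hsq]
      _ = G*s*(2*s) := by ring
  have hu : (0:ℝ) ≤ s/(T:ℝ) := by positivity
  -- the main per-reference-point bound
  have final : ∀ (x' : EuclideanSpace ℝ (Fin m)) (y' : EuclideanSpace ℝ (Fin n)),
      ‖(WithLp.equiv 2 (EuclideanSpace ℝ (Fin m) × EuclideanSpace ℝ (Fin n))).symm
        (xbar, y') - zstar‖^2 ≤ 10*B →
      ‖(WithLp.equiv 2 (EuclideanSpace ℝ (Fin m) × EuclideanSpace ℝ (Fin n))).symm
        (x', ybar) - zstar‖^2 ≤ 10*B →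
      f xbar y' - f x' ybar ≤ 33*B*(s/(T:ℝ)) := by
    intro x' y' hy' hx'
    rw [hsplitn xbar y'] at hy'
    rw [hsplitn x' ybar] at hx'
    have hy2 : ‖y' - ystar‖^2 ≤ 10*B := by linarith [sq_nonneg ‖xbar - xstar‖]
    have hx2 : ‖x' - xstar‖^2 ≤ 10*B := by linarith [sq_nonneg ‖ybar - ystar‖]
    have hwz : ‖(WithLp.equiv 2 (EuclideanSpace ℝ (Fin m) × EuclideanSpace ℝ (Fin n))).symm
        (x', y') - zstar‖^2 ≤ 20*B := by
      rw [hsplitn x' y']; linarith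
    have hr1 : ‖z 1 - (WithLp.equiv 2 (EuclideanSpace ℝ (Fin m) × EuclideanSpace ℝ (Fin n))).symm
        (x', y')‖^2 ≤ 30*B := by
      set w := (WithLp.equiv 2 (EuclideanSpace ℝ (Fin m) × EuclideanSpace ℝ (Fin n))).symm
          (x', y') with hwdef
      have tri : ‖z 1 - w‖ ≤ ‖z 1 - zstar‖ + ‖w - zstar‖ := by
        have e : z 1 - w = (z 1 - zstar) - (w - zstar) := by abel
        rw [e]
        exact norm_sub_le _ _
      have tsq : ‖z 1 - w‖^2 ≤ (‖z 1 - zstar‖ + ‖w - zstar‖)^2 :=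
        pow_le_pow_left₀ (norm_nonneg _) tri 2
      have h30 := sq_sum_bound (norm_nonneg (z 1 - zstar)) (norm_nonneg (w - zstar)) hz1B hwz
      linarith
    have hS := sumbound x' y'
    have hS2 : (2*α) * ∑ k ∈ Finset.Icc 1 T, (f (z (D k)).fst y' - f x' (z (D k)).snd)
        ≤ 30*B + (T:ℝ)*(6*α^2*G^2*τmax) := by linarith
    have hSd : ∑ k ∈ Finset.Icc 1 T, (f (z (D k)).fst y' - f x' (z (D k)).snd)
        ≤ (30*B + (T:ℝ)*(6*α^2*G^2*τmax))/(2*α) := by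
      rw [le_div_iff₀ (by positivity : (0:ℝ) < 2*α)]
      linarith
    have hTS : (T:ℝ)⁻¹ * ∑ k ∈ Finset.Icc 1 T, (f (z (D k)).fst y' - f x' (z (D k)).snd)
        ≤ (T:ℝ)⁻¹ * ((30*B + (T:ℝ)*(6*α^2*G^2*τmax))/(2*α)) :=
      mul_le_mul_of_nonneg_left hSd (by positivity)
    have hterm1 : (T:ℝ)⁻¹ * ((30*B + (T:ℝ)*(6*α^2*G^2*τmax))/(2*α))
        = (30*B + (3/2)*(G/L))*(s/(T:ℝ)) := by
      rw [hTt, div_eq_mul_inv _ (2*α), h2αs]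
      ring
    have hterm2 : 2*(G * (α * (Real.sqrt 2 * G) * (τmax:ℝ)))
        = Real.sqrt 2 * ((G/L) * (s/(T:ℝ))) := by
      have e : 2*(G * (α * (Real.sqrt 2 * G) * (τmax:ℝ)))
          = 2*Real.sqrt 2*(α * (G^2 * (τmax:ℝ))) := by ring
      rw [e, hαG2]
      field_simp
    have hSsplit : (T:ℝ)⁻¹ * ∑ k ∈ Finset.Icc 1 T, (f (z (D k)).fst y' - f x' (z (D k)).snd)
        = (T:ℝ)⁻¹ * ∑ k ∈ Finset.Icc 1 T, f (z (D k)).fst y'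
          - (T:ℝ)⁻¹ * ∑ k ∈ Finset.Icc 1 T, f x' (z (D k)).snd := by
      rw [Finset.sum_sub_distrib, mul_sub]
    have hJX := jensX y'
    have hJY := jensY x'
    have hLipX : f xbar y' ≤ f ((T:ℝ)⁻¹ • ∑ k ∈ Finset.Icc 1 T, (z (D k)).fst) y'
        + G * (α * (Real.sqrt 2 * G) * (τmax:ℝ)) := by
      have h1 := lipX xbar ((T:ℝ)⁻¹ • ∑ k ∈ Finset.Icc 1 T, (z (D k)).fst) y'
      have h2 := mul_le_mul_of_nonneg_left avgdX hG0.le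
      linarith
    have hLipY : f x' ((T:ℝ)⁻¹ • ∑ k ∈ Finset.Icc 1 T, (z (D k)).snd) ≤ f x' ybar
        + G * (α * (Real.sqrt 2 * G) * (τmax:ℝ)) := by
      have h1 := lipY x' ((T:ℝ)⁻¹ • ∑ k ∈ Finset.Icc 1 T, (z (D k)).snd) ybar
      have e : ‖(T:ℝ)⁻¹ • ∑ k ∈ Finset.Icc 1 T, (z (D k)).snd - ybar‖
          = ‖ybar - (T:ℝ)⁻¹ • ∑ k ∈ Finset.Icc 1 T, (z (D k)).snd‖ := norm_sub_rev _ _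
      rw [e] at h1
      have h2 := mul_le_mul_of_nonneg_left avgdY hG0.le
      linarith
    have hgap : f xbar y' - f x' ybar
        ≤ (T:ℝ)⁻¹ * ∑ k ∈ Finset.Icc 1 T, (f (z (D k)).fst y' - f x' (z (D k)).snd)
          + 2*(G * (α * (Real.sqrt 2 * G) * (τmax:ℝ))) := by
      rw [hSsplit]
      linarith
    have hcomb : (3/2)*(G/L) + Real.sqrt 2*(G/L) ≤ 3*B := by
      have h1 : Real.sqrt 2*(G/L) ≤ (3/2)*(G/L) :=
        mul_le_mul_of_nonneg_right hsqrt2 (div_nonneg hG0.le hL0.le)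
      linarith
    have hfin : (30*B + (3/2)*(G/L))*(s/(T:ℝ)) + Real.sqrt 2*((G/L)*(s/(T:ℝ)))
        ≤ 33*B*(s/(T:ℝ)) := by
      have m1 : ((3/2)*(G/L) + Real.sqrt 2*(G/L))*(s/(T:ℝ)) ≤ (3*B)*(s/(T:ℝ)) :=
        mul_le_mul_of_nonneg_right hcomb hu
      calc (30*B + (3/2)*(G/L))*(s/(T:ℝ)) + Real.sqrt 2*((G/L)*(s/(T:ℝ)))
          = 30*(B*(s/(T:ℝ))) + ((3/2)*(G/L) + Real.sqrt 2*(G/L))*(s/(T:ℝ)) := by ring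
        _ ≤ 30*(B*(s/(T:ℝ))) + (3*B)*(s/(T:ℝ)) := by linarith
        _ = 33*B*(s/(T:ℝ)) := by ring
    linarith
  -- conclude via sSup/sInf
  have hybarH : (WithLp.equiv 2 (EuclideanSpace ℝ (Fin m) × EuclideanSpace ℝ (Fin n))).symm
      (xbar, ybar) ∈ H := by rw [hH]; exact hzbar10
  have hne1 : ((fun y => f xbar y) ''
      {y | (WithLp.equiv 2 (EuclideanSpace ℝ (Fin m) × EuclideanSpace ℝ (Fin n))).symm
        (xbar, y) ∈ H}).Nonempty := ⟨f xbar ybar, ybar, hybarH, rfl⟩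
  have hne2 : ((fun x => f x ybar) ''
      {x | (WithLp.equiv 2 (EuclideanSpace ℝ (Fin m) × EuclideanSpace ℝ (Fin n))).symm
        (x, ybar) ∈ H}).Nonempty := ⟨f xbar ybar, xbar, hybarH, rfl⟩
  have hbound : ∀ a ∈ ((fun y => f xbar y) ''
      {y | (WithLp.equiv 2 (EuclideanSpace ℝ (Fin m) × EuclideanSpace ℝ (Fin n))).symm
        (xbar, y) ∈ H}),
      ∀ b ∈ ((fun x => f x ybar) ''
      {x | (WithLp.equiv 2 (EuclideanSpace ℝ (Fin m) × EuclideanSpace ℝ (Fin n))).symm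
        (x, ybar) ∈ H}), a ≤ 33*B*(s/(T:ℝ)) + b := by
    rintro a ⟨y', hy', rfl⟩ b ⟨x', hx', rfl⟩
    rw [hH] at hy' hx'
    have := final x' y' hy' hx'
    linarith
  have hsup : sSup ((fun y => f xbar y) ''
      {y | (WithLp.equiv 2 (EuclideanSpace ℝ (Fin m) × EuclideanSpace ℝ (Fin n))).symm
        (xbar, y) ∈ H})
      ≤ 33*B*(s/(T:ℝ)) + sInf ((fun x => f x ybar) ''
      {x | (WithLp.equiv 2 (EuclideanSpace ℝ (Fin m) × EuclideanSpace ℝ (Fin n))).symm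
        (x, ybar) ∈ H}) := by
    apply csSup_le hne1
    intro a ha
    have h1 : a - 33*B*(s/(T:ℝ)) ≤ sInf ((fun x => f x ybar) ''
        {x | (WithLp.equiv 2 (EuclideanSpace ℝ (Fin m) × EuclideanSpace ℝ (Fin n))).symm
          (x, ybar) ∈ H}) := by
      apply le_csInf hne2
      intro b hb
      have := hbound a ha b hb
      linarith
    linarith
  have hsT : s/(T:ℝ) = Real.sqrt (G*L*(τmax:ℝ)/(T:ℝ)) := by
    rw [hs_def]
    rw [show L*G*(τmax:ℝ)*(T:ℝ) = (G*L*(τmax:ℝ)/(T:ℝ)) * (T:ℝ)^2 by field_simp]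
    rw [Real.sqrt_mul (by positivity), Real.sqrt_sq hT0.le, mul_div_assoc,
      div_self hT0.ne', mul_one]
  have hpos : (0:ℝ) ≤ B * Real.sqrt (G*L*(τmax:ℝ)/(T:ℝ)) := by positivity
  rw [hsT] at hsup
  linarith
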